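/- Let n ≥ 1, ζ = exp(2πi/(3n)), and let v = (v₁,…,vₙ), w = (w₁,…,wₙ) ∈ ℂⁿ with vₖ ≠ 0 for all 1 ≤ k ≤ n. Suppose |w₁| = |v₁|, w₁·wₖ·conj(w_{k+1}) = v₁·vₖ·conj(v_{k+1}) for all 1 ≤ k ≤ n−1, and wₙ³ = vₙ³. Then there exists θ ∈ ℂ with θ^{3n} = 1 such that wₖ = θᵏ·vₖ for all 1 ≤ k ≤ n; i.e., w lies in the ℤ_{3n}-orbit of v. In particular, degree-three unitary invariants separate generic orbits of this action. -/

import Mathlib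

/-- **Degree-three unitary invariants separate generic orbits of `ℤ_{3n}` acting on
`ℂⁿ` with weights `1,…,n`.** (Vectors are 0-indexed: `v ⟨k-1,_⟩` is the mathematical `vₖ`.)
If all coordinates of `v` are nonzero, `|w₁| = |v₁|`, the chain of cubic unitary invariants
`w₁ wₖ conj(w_{k+1}) = v₁ vₖ conj(v_{k+1})` holds for `1 ≤ k ≤ n-1`, and `wₙ³ = vₙ³`,
then `wₖ = θᵏ vₖ` for all `k`, for some `θ` with `θ^{3n} = 1`. -/
theorem Z3n_orbit_separation
    {n : ℕ} (hn : 1 ≤ n) (v w : Fin n → ℂ)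
    (hv : ∀ k, v k ≠ 0)
    (h0 : ‖w ⟨0, by omega⟩‖ = ‖v ⟨0, by omega⟩‖)
    (hchain : ∀ (k : ℕ) (hk : k + 1 < n),
      w ⟨0, by omega⟩ * w ⟨k, by omega⟩ * starRingEnd ℂ (w ⟨k + 1, hk⟩) =
        v ⟨0, by omega⟩ * v ⟨k, by omega⟩ * starRingEnd ℂ (v ⟨k + 1, hk⟩))
    (hlast : w ⟨n - 1, by omega⟩ ^ 3 = v ⟨n - 1, by omega⟩ ^ 3) :
    ∃ θ : ℂ, θ ^ (3 * n) = 1 ∧ ∀ k : Fin n, w k = θ ^ ((k : ℕ) + 1) * v k := by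
  obtain ⟨m, rfl⟩ : ∃ m, n = m + 1 := ⟨n - 1, by omega⟩
  have hv0 : v ⟨0, by omega⟩ ≠ 0 := hv _
  have hw0 : w ⟨0, by omega⟩ ≠ 0 := by
    intro h
    rw [h] at h0
    simp only [norm_zero] at h0
    exact hv0 (by simpa using h0.symm)
  obtain ⟨θ, hθdef⟩ : ∃ θ : ℂ, θ = w ⟨0, by omega⟩ / v ⟨0, by omega⟩ := ⟨_, rfl⟩
  have hθ0 : θ ≠ 0 := hθdef ▸ div_ne_zero hw0 hv0
  have habs : ‖θ‖ = 1 := by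
    rw [hθdef, norm_div, h0, div_self]
    simpa using hv0
  have hconjθ : starRingEnd ℂ θ = θ⁻¹ := by
    have h1 : θ * starRingEnd ℂ θ = 1 := by
      rw [Complex.mul_conj]
      norm_cast
      rw [Complex.normSq_eq_norm_sq, habs]; norm_num
    exact (inv_eq_of_mul_eq_one_right h1).symm
  have hw0' : w ⟨0, by omega⟩ = θ * v ⟨0, by omega⟩ := by
    rw [hθdef, div_mul_cancel₀ _ hv0]
  have key : ∀ k (hk : k < m + 1), w ⟨k, hk⟩ = θ ^ (k + 1) * v ⟨k, hk⟩ := by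
    intro k
    induction k with
    | zero => intro hk; simpa using hw0'
    | succ k ih =>
      intro hk
      have hk' : k < m + 1 := by omega
      have hc := hchain k hk
      rw [ih hk', hw0'] at hc
      have hvk := hv ⟨k, hk'⟩
      have h2 : θ ^ (k + 2) * starRingEnd ℂ (w ⟨k + 1, hk⟩)
          = starRingEnd ℂ (v ⟨k + 1, hk⟩) := by
        have := mul_left_cancel₀ (mul_ne_zero hv0 hvk)
          (show v ⟨0, by omega⟩ * v ⟨k, hk'⟩ * (θ ^ (k + 2) * starRingEnd ℂ (w ⟨k + 1, hk⟩))
              = v ⟨0, by omega⟩ * v ⟨k, hk'⟩ * starRingEnd ℂ (v ⟨k + 1, hk⟩) by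
            rw [← hc]; ring)
        exact this
      have h3 : starRingEnd ℂ (w ⟨k + 1, hk⟩)
          = starRingEnd ℂ (θ ^ (k + 2) * v ⟨k + 1, hk⟩) := by
        rw [map_mul, map_pow, hconjθ]
        rw [← h2]
        field_simp
        rw [mul_assoc, ← mul_pow, one_div_mul_cancel hθ0, one_pow, mul_one]
      have := congrArg (starRingEnd ℂ) h3
      simpa using this
  refine ⟨θ, ?_, ?_⟩
  · have hm := key m (by omega)
    have hvm := hv ⟨m, by omega⟩
    have hl : (θ ^ (m + 1) * v ⟨m, by omega⟩) ^ 3 = v ⟨m, by omega⟩ ^ 3 := by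
      rw [← hm]; exact hlast
    have : θ ^ (3 * (m + 1)) * v ⟨m, by omega⟩ ^ 3 = v ⟨m, by omega⟩ ^ 3 := by
      conv_rhs => rw [← hl]
      ring
    have := mul_right_cancel₀ (pow_ne_zero 3 hvm) (this.trans (one_mul _).symm)
    exact this
  · intro k
    have := key k.1 k.2
    simpa using this
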